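/- Let Λ ≤ Λ₁ ≤ Θ be frames of a family of compatible frames and let p, q be probability potentials with d(p) = Θ and d(q) = Λ. Then π_{Λ₁}(p · q) = π_{Λ₁}(p) · q. -/

import Mathlib

open scoped NNReal

/-- A family of compatible frames (f.c.f.): a collection of finite nonempty frames
together with (unique) refinings between them, closed under composition, containing
identities, with minimal common refinements (binary joins). -/
structure FCF where
  /-- the frames of the family -/
  Frame : Type
  /-- the elements of each frame -/
  El : Frame → Type
  elFintype : ∀ Θ, Fintype (El Θ)
  elNonempty : ∀ Θ, Nonempty (El Θ)
  /-- `le Θ Λ` holds iff the family contains a refining of `Θ` to `Λ`. -/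
  le : Frame → Frame → Prop
  le_refl : ∀ Θ, le Θ Θ
  le_trans : ∀ {Θ Λ Ξ}, le Θ Λ → le Λ Ξ → le Θ Ξ
  le_antisymm : ∀ {Θ Λ}, le Θ Λ → le Λ Θ → Θ = Λ
  /-- the (unique) refining map of `Θ` to `Λ`, when `le Θ Λ` -/
  τ : ∀ {Θ Λ}, le Θ Λ → El Θ → Set (El Λ)
  τ_nonempty : ∀ {Θ Λ} (h : le Θ Λ) (θ : El Θ), (τ h θ).Nonempty
  τ_disjoint : ∀ {Θ Λ} (h : le Θ Λ) (θ θ' : El Θ), θ ≠ θ' → τ h θ ∩ τ h θ' = ∅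
  τ_cover : ∀ {Θ Λ} (h : le Θ Λ) (x : El Λ), ∃ θ, x ∈ τ h θ
  /-- the identity refining -/
  τ_refl : ∀ {Θ} (h : le Θ Θ) (θ : El Θ), τ h θ = {θ}
  /-- closure under composition of refinings -/
  τ_comp : ∀ {Θ Λ Ξ} (h₁ : le Θ Λ) (h₂ : le Λ Ξ) (h₃ : le Θ Ξ) (θ : El Θ),
    τ h₃ θ = ⋃ lam ∈ τ h₁ θ, τ h₂ lam
  /-- identity of coarsenings: two coarsenings of a frame with the same blocks coincide -/
  coarsening_unique : ∀ {Θ₁ Θ₂ Λ} (h₁ : le Θ₁ Λ) (h₂ : le Θ₂ Λ),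
    (∀ θ₁, ∃ θ₂, τ h₁ θ₁ = τ h₂ θ₂) → (∀ θ₂, ∃ θ₁, τ h₁ θ₁ = τ h₂ θ₂) → Θ₁ = Θ₂
  /-- minimal common refinement of two frames -/
  sup : Frame → Frame → Frame
  le_sup_left : ∀ Θ Λ, le Θ (sup Θ Λ)
  le_sup_right : ∀ Θ Λ, le Λ (sup Θ Λ)
  sup_le : ∀ {Θ Λ Ξ}, le Θ Ξ → le Λ Ξ → le (sup Θ Λ) Ξ
  /-- every element of the minimal common refinement is the (unique) intersection point
  of a block of each factor -/
  sup_atom : ∀ {Θ Λ} (h₁ : le Θ (sup Θ Λ)) (h₂ : le Λ (sup Θ Λ)) (x : El (sup Θ Λ)),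
    ∃ (θ : El Θ) (lam : El Λ), τ h₁ θ ∩ τ h₂ lam = {x}

namespace FCF

instance (F : FCF) (Θ : F.Frame) : Fintype (F.El Θ) := F.elFintype Θ

instance (F : FCF) (Θ : F.Frame) : Nonempty (F.El Θ) := F.elNonempty Θ

instance instSemilatticeSup (F : FCF) : SemilatticeSup F.Frame where
  le := F.le
  le_refl := F.le_refl
  le_trans := fun _ _ _ => F.le_trans
  le_antisymm := fun _ _ => F.le_antisymm
  sup := F.sup
  le_sup_left := F.le_sup_left
  le_sup_right := F.le_sup_right
  sup_le := fun _ _ _ h h' => F.sup_le h h'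

/-- the indicator potential `f_p` of the support of a potential -/
noncomputable def fpot {X : Type} (p : X → ℝ≥0) : X → ℝ≥0 := fun x =>
  haveI := Classical.propDecidable (0 < p x)
  if 0 < p x then 1 else 0

/-- the support of a potential -/
def psupp {X : Type} (p : X → ℝ≥0) : Set X := {x | 0 < p x}

/-- the likelihood (plausibility of singletons) function of a set potential -/
noncomputable def plfn {X : Type} (m : Set X → ℝ≥0) : X → ℝ≥0 :=
  fun x => ∑ᶠ (S : Set X) (_ : x ∈ S), m S

variable (F : FCF)

/-- `θ` and `lam` are compatible: their refinings to the minimal common refinement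
of the two frames intersect. -/
def compat {Θ Λ : F.Frame} (θ : F.El Θ) (lam : F.El Λ) : Prop :=
  (F.τ (F.le_sup_left Θ Λ) θ ∩ F.τ (F.le_sup_right Θ Λ) lam).Nonempty

/-- `(θ₁, θ₂, lam) ∈ R(Θ₁, Θ₂, Λ)`: joint compatibility of a triple. -/
def compat3 {Θ₁ Θ₂ Λ : F.Frame} (θ₁ : F.El Θ₁) (θ₂ : F.El Θ₂) (lam : F.El Λ) : Prop :=
  (F.τ (F.le_trans (F.le_sup_left Θ₁ Θ₂) (F.le_sup_left (F.sup Θ₁ Θ₂) Λ)) θ₁ ∩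
    F.τ (F.le_trans (F.le_sup_right Θ₁ Θ₂) (F.le_sup_left (F.sup Θ₁ Θ₂) Λ)) θ₂ ∩
    F.τ (F.le_sup_right (F.sup Θ₁ Θ₂) Λ) lam).Nonempty

/-- `Θ₁ ⊥ Θ₂ | Λ` : conditional independence of two frames given a third,
`R_λ(Θ₁,Θ₂) = R_λ(Θ₁) × R_λ(Θ₂)` for every `λ ∈ Λ`. -/
def CondIndep (Θ₁ Θ₂ Λ : F.Frame) : Prop :=
  ∀ (lam : F.El Λ) (θ₁ : F.El Θ₁) (θ₂ : F.El Θ₂),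
    F.compat3 θ₁ θ₂ lam ↔ (F.compat θ₁ lam ∧ F.compat θ₂ lam)

/-- joint compatibility of a family of elements together with `lam`. -/
def compatFam {ι : Type} {Θ : ι → F.Frame} {Λ : F.Frame}
    (θ : ∀ i, F.El (Θ i)) (lam : F.El Λ) : Prop :=
  ∃ (Ξ : F.Frame) (hΘ : ∀ i, F.le (Θ i) Ξ) (hΛ : F.le Λ Ξ) (x : F.El Ξ),
    (∀ i, x ∈ F.τ (hΘ i) (θ i)) ∧ x ∈ F.τ hΛ lam

/-- `⊥ {Θ_i : i ∈ ι} | Λ` : conditional independence of a family of frames given `Λ`,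
`R_λ(Θ₁,…,Θₙ) = R_λ(Θ₁) × ⋯ × R_λ(Θₙ)` for every `λ ∈ Λ`. -/
def CondIndepFam {ι : Type} (Θ : ι → F.Frame) (Λ : F.Frame) : Prop :=
  ∀ (lam : F.El Λ) (θ : ∀ i, F.El (Θ i)),
    F.compatFam θ lam ↔ ∀ i, F.compat (θ i) lam

/-- `t_Λ(x)`, the unique element of the coarsening `Λ` whose block contains `x`. -/
noncomputable def proj {Λ Θ : F.Frame} (h : F.le Λ Θ) (x : F.El Θ) : F.El Λ :=
  (F.τ_cover h x).choose

/-- probability potentials on the frame `Θ` -/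
abbrev Pot (Θ : F.Frame) : Type := F.El Θ → ℝ≥0

/-- the combination of two probability potentials, on the join of their domains -/
noncomputable def combine {Θ₁ Θ₂ : F.Frame} (p₁ : F.Pot Θ₁) (p₂ : F.Pot Θ₂) :
    F.Pot (F.sup Θ₁ Θ₂) :=
  fun x => p₁ (F.proj (F.le_sup_left Θ₁ Θ₂) x) * p₂ (F.proj (F.le_sup_right Θ₁ Θ₂) x)

/-- the transport `π_Λ(p)` of a probability potential to the frame `Λ` -/
noncomputable def transport {Θ : F.Frame} (p : F.Pot Θ) (Λ : F.Frame) : F.Pot Λ :=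
  fun lam => ∑ᶠ (θ : F.El Θ) (_ : F.compat θ lam), p θ

/-- the max-transport `t^max_Λ(p)` of a probability potential to the frame `Λ` -/
noncomputable def maxTransport {Θ : F.Frame} (p : F.Pot Θ) (Λ : F.Frame) : F.Pot Λ :=
  fun lam => ⨆ (θ : F.El Θ) (_ : F.compat θ lam), p θ

/-- combination of two set potentials, on the join of their domains -/
noncomputable def setCombine {Θ₁ Θ₂ : F.Frame} (m₁ : Set (F.El Θ₁) → ℝ≥0)
    (m₂ : Set (F.El Θ₂) → ℝ≥0) : Set (F.El (F.sup Θ₁ Θ₂)) → ℝ≥0 :=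
  fun S => ∑ᶠ (S₁ : Set (F.El Θ₁)) (S₂ : Set (F.El Θ₂))
    (_ : (⋃ θ ∈ S₁, F.τ (F.le_sup_left Θ₁ Θ₂) θ) ∩
         (⋃ θ ∈ S₂, F.τ (F.le_sup_right Θ₁ Θ₂) θ) = S),
    m₁ S₁ * m₂ S₂

/-- the conditional `p_{Θ|Λ} = π_Θ(p) · (π_Λ(p))⁻¹` of `p` for `Θ` given `Λ ≤ Θ` -/
noncomputable def condl {Δ : F.Frame} (p : F.Pot Δ) {Λ Θ : F.Frame} (h : F.le Λ Θ) :
    F.Pot Θ :=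
  fun θ => F.transport p Θ θ * (F.transport p Λ (F.proj h θ))⁻¹

/-- the conditional `p_{Θ|Λ} = π_{Θ∨Λ}(p) · (π_Λ(p))⁻¹` of `p` for arbitrary `Θ` given `Λ` -/
noncomputable def condl2 {Δ : F.Frame} (p : F.Pot Δ) (Θ Λ : F.Frame) :
    F.Pot (F.sup Θ Λ) :=
  fun x => F.transport p (F.sup Θ Λ) x *
    (F.transport p Λ (F.proj (F.le_sup_right Θ Λ) x))⁻¹

/-- the solution set `s_p^Λ(lam)`: maximizers of `p` among elements compatible with `lam` -/
noncomputable def solSet {Θ : F.Frame} (p : F.Pot Θ) (Λ : F.Frame) (lam : F.El Λ) :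
    Set (F.El Θ) :=
  {θ | F.compat θ lam ∧ p θ = F.maxTransport p Λ lam}

end FCF


namespace FCF

variable (F : FCF)

open scoped Classical

lemma proj_spec {Λ Θ : F.Frame} (h : F.le Λ Θ) (x : F.El Θ) :
    x ∈ F.τ h (F.proj h x) := (F.τ_cover h x).choose_spec

lemma proj_eq {Λ Θ : F.Frame} (h : F.le Λ Θ) {x : F.El Θ} {lam : F.El Λ}
    (hx : x ∈ F.τ h lam) : F.proj h x = lam := by
  by_contra hne
  have hd := F.τ_disjoint h _ _ hne
  have : x ∈ (∅ : Set (F.El Θ)) := hd ▸ Set.mem_inter (F.proj_spec h x) hx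
  exact this

lemma mem_τ_iff {Λ Θ : F.Frame} (h : F.le Λ Θ) {x : F.El Θ} {lam : F.El Λ} :
    x ∈ F.τ h lam ↔ F.proj h x = lam := by
  constructor
  · exact F.proj_eq h
  · rintro rfl; exact F.proj_spec h x

lemma proj_comp {A B C : F.Frame} (h₁ : F.le A B) (h₂ : F.le B C) (x : F.El C) :
    F.proj (F.le_trans h₁ h₂) x = F.proj h₁ (F.proj h₂ x) := by
  apply F.proj_eq
  rw [F.τ_comp h₁ h₂]
  exact Set.mem_biUnion (F.proj_spec h₁ (F.proj h₂ x)) (F.proj_spec h₂ x)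

lemma proj_self {Θ : F.Frame} (h : F.le Θ Θ) (x : F.El Θ) : F.proj h x = x := by
  apply F.proj_eq
  rw [F.τ_refl h]
  exact rfl

lemma proj_inv {A B : F.Frame} (h₁ : F.le A B) (h₂ : F.le B A) (x : F.El B) :
    F.proj h₂ (F.proj h₁ x) = x := by
  rw [← F.proj_comp h₂ h₁ x, F.proj_self]

lemma compat_iff_of_le {Λ Θ : F.Frame} (h : F.le Λ Θ) (θ : F.El Θ) (lam : F.El Λ) :
    F.compat θ lam ↔ F.proj h θ = lam := by
  constructor
  · rintro ⟨s, hs1, hs2⟩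
    have h1 : F.proj (F.le_sup_left Θ Λ) s = θ := F.proj_eq _ hs1
    have h2 : F.proj (F.le_sup_right Θ Λ) s = lam := F.proj_eq _ hs2
    have h3 : F.proj (F.le_sup_right Θ Λ) s
        = F.proj h (F.proj (F.le_sup_left Θ Λ) s) :=
      F.proj_comp h (F.le_sup_left Θ Λ) s
    rw [h3, h1] at h2
    exact h2
  · intro he
    obtain ⟨s, hs⟩ := F.τ_nonempty (F.le_sup_left Θ Λ) θ
    refine ⟨s, hs, ?_⟩
    rw [F.mem_τ_iff (F.le_sup_right Θ Λ)]
    have h3 : F.proj (F.le_sup_right Θ Λ) s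
        = F.proj h (F.proj (F.le_sup_left Θ Λ) s) :=
      F.proj_comp h (F.le_sup_left Θ Λ) s
    rw [h3, F.proj_eq _ hs, he]

lemma transport_apply {Θ Λ : F.Frame} (p : F.Pot Θ) (lam : F.El Λ) :
    F.transport p Λ lam = ∑ θ : F.El Θ, if F.compat θ lam then p θ else 0 := by
  classical
  rw [transport, ← finsum_eq_sum_of_fintype]
  congr 1
  funext θ
  exact finsum_eq_if

end FCF

namespace FCF

/-- If `Λ ≤ Λ₁ ≤ Θ`, `d(p) = Θ` and `d(q) = Λ`, then
`π_{Λ₁}(p · q) = π_{Λ₁}(p) · q`. -/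
theorem transport_combine_of_le (F : FCF) (Θ Λ Λ₁ : F.Frame)
    (hΛΛ₁ : F.le Λ Λ₁) (hΛ₁Θ : F.le Λ₁ Θ) (p : F.Pot Θ) (q : F.Pot Λ) :
    F.transport (F.combine p q) Λ₁ =
      fun x => F.transport p Λ₁ x * q (F.proj hΛΛ₁ x) := by
  classical
  funext lam
  have hΘS : F.le Θ (F.sup Θ Λ) := F.le_sup_left Θ Λ
  have hSΘ : F.le (F.sup Θ Λ) Θ :=
    F.sup_le (F.le_refl Θ) (F.le_trans hΛΛ₁ hΛ₁Θ)
  rw [F.transport_apply, F.transport_apply]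
  have hbij : Function.Bijective (F.proj hΘS) :=
    Function.bijective_iff_has_inverse.2
      ⟨F.proj hSΘ, fun s => F.proj_inv hΘS hSΘ s, fun θ => F.proj_inv hSΘ hΘS θ⟩
  rw [Finset.sum_mul]
  refine Fintype.sum_bijective (F.proj hΘS) hbij _ _ ?_
  intro s
  have hc1 : F.compat s lam ↔ F.proj hΛ₁Θ (F.proj hΘS s) = lam := by
    rw [F.compat_iff_of_le (F.le_trans hΛ₁Θ hΘS), F.proj_comp]
  have hc2 : F.compat (F.proj hΘS s) lam ↔ F.proj hΛ₁Θ (F.proj hΘS s) = lam :=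
    F.compat_iff_of_le hΛ₁Θ _ lam
  have hcomb : F.combine p q s
      = p (F.proj hΘS s) * q (F.proj hΛΛ₁ (F.proj hΛ₁Θ (F.proj hΘS s))) := by
    rw [combine]
    congr 1
    have : F.proj (F.le_sup_right Θ Λ) s
        = F.proj (F.le_trans (F.le_trans hΛΛ₁ hΛ₁Θ) hΘS) s := rfl
    rw [this, F.proj_comp (F.le_trans hΛΛ₁ hΛ₁Θ) hΘS, F.proj_comp hΛΛ₁ hΛ₁Θ]
  rw [hcomb]
  by_cases hif : F.proj hΛ₁Θ (F.proj hΘS s) = lam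
  · rw [if_pos (hc1.2 hif), if_pos (hc2.2 hif), hif]
  · rw [if_neg (fun hcc => hif (hc1.1 hcc)), if_neg (fun hcc => hif (hc2.1 hcc)), zero_mul]


end FCF
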